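/- Let D be a derivation of an evolution algebra A with natural basis {e_1,...,e_n}, over a field of characteristic ≠ 2, with matrix (d_{ij}). Then for all i ≠ j, d_{ij}·e_i² + d_{ji}·e_j² = 0; in particular, if e_i² and e_j² are linearly independent, then d_{ij} = d_{ji} = 0. -/

import Mathlib

/-- **Off-diagonal constraints on derivations of evolution algebras.**
If `D` is a derivation of an evolution algebra with natural basis `b` and matrix
`d i j = (b.repr (D (b j))) i`, then for `i ≠ j` one has
`d i j • bᵢ² + d j i • bⱼ² = 0`; in particular if `bᵢ²` and `bⱼ²` are linearly
independent then `d i j = d j i = 0`. -/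
theorem stmt_12 {F : Type*} [Field F] (hchar : ringChar F ≠ 2)
    {A : Type*} [NonUnitalNonAssocRing A] [Module F A]
    [SMulCommClass F A A] [IsScalarTower F A A]
    {n : ℕ} (b : Module.Basis (Fin n) F A)
    (hb : ∀ i j : Fin n, i ≠ j → b i * b j = 0)
    (D : A →ₗ[F] A) (hD : ∀ x y : A, D (x * y) = D x * y + x * D y) :
    ∀ i j : Fin n, i ≠ j →
      (b.repr (D (b j)) i • (b i * b i) + b.repr (D (b i)) j • (b j * b j) = 0 ∧
       (LinearIndependent F ![b i * b i, b j * b j] →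
          b.repr (D (b j)) i = 0 ∧ b.repr (D (b i)) j = 0)) := by
  have keyR : ∀ (x : A) (j : Fin n), x * b j = b.repr x j • (b j * b j) := by
    intro x j
    conv_lhs => rw [← b.sum_repr x]
    rw [Finset.sum_mul, Finset.sum_eq_single j]
    · rw [smul_mul_assoc]
    · intro k _ hk
      rw [smul_mul_assoc, hb k j hk, smul_zero]
    · intro h; exact absurd (Finset.mem_univ j) h
  have keyL : ∀ (x : A) (i : Fin n), b i * x = b.repr x i • (b i * b i) := by
    intro x i
    conv_lhs => rw [← b.sum_repr x]
    rw [Finset.mul_sum, Finset.sum_eq_single i]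
    · rw [mul_smul_comm]
    · intro k _ hk
      rw [mul_smul_comm, hb i k (Ne.symm hk), smul_zero]
    · intro h; exact absurd (Finset.mem_univ i) h
  intro i j hij
  have h0 : b.repr (D (b i)) j • (b j * b j) + b.repr (D (b j)) i • (b i * b i) = 0 := by
    have := hD (b i) (b j)
    rw [hb i j hij, map_zero, keyR (D (b i)) j, keyL (D (b j)) i] at this
    exact this.symm
  have h0' : b.repr (D (b j)) i • (b i * b i) + b.repr (D (b i)) j • (b j * b j) = 0 := by
    rw [add_comm]; exact h0
  refine ⟨h0', fun hli => ?_⟩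
  have := (Fintype.linearIndependent_iff.mp hli)
    ![b.repr (D (b j)) i, b.repr (D (b i)) j] ?_
  · exact ⟨this 0, this 1⟩
  · simpa [Fin.sum_univ_two] using h0'
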